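/- Let A be a closable densely defined operator and {gₙ} a weak A-frame. Then there exists a Bessel sequence {tₙ} in H that is a weak A-dual of {gₙ}, i.e. ⟨Ah, u⟩ = ∑ₙ ⟨h, tₙ⟩⟨gₙ, u⟩ for all h ∈ D(A) and u ∈ D(A*). -/

import Mathlib

open scoped ComplexInnerProductSpace

/-- Factorization lemma: if `L` is dominated by `T` (both linear maps from a plain module
into Hilbert/Banach spaces), then `L` factors through `T` via a continuous linear map. -/
lemma exists_clm_factor {V E F : Type*} [AddCommGroup V] [Module ℂ V]
    [NormedAddCommGroup E] [InnerProductSpace ℂ E] [CompleteSpace E]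
    [NormedAddCommGroup F] [NormedSpace ℂ F] [CompleteSpace F]
    (T : V →ₗ[ℂ] E) (L : V →ₗ[ℂ] F) (C : ℝ)
    (hbound : ∀ v, ‖L v‖ ≤ C * ‖T v‖) :
    ∃ Q : E →L[ℂ] F, ∀ v, Q (T v) = L v := by
  classical
  set C' : ℝ := max C 0 with hC'
  have hbound' : ∀ v, ‖L v‖ ≤ C' * ‖T v‖ := fun v =>
    (hbound v).trans (mul_le_mul_of_nonneg_right (le_max_left _ _) (norm_nonneg _))
  have key : ∀ u v : V, T u = T v → L u = L v := by
    intro u v huv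
    have h0 : T (u - v) = 0 := by rw [map_sub, huv, sub_self]
    have h1 : ‖L (u - v)‖ ≤ C' * ‖T (u - v)‖ := hbound' _
    rw [h0, norm_zero, mul_zero] at h1
    have h2 : L (u - v) = 0 := norm_le_zero_iff.mp h1
    rw [map_sub, sub_eq_zero] at h2
    exact h2
  set R : Submodule ℂ E := LinearMap.range T with hR
  set K : Submodule ℂ E := R.topologicalClosure with hK
  haveI : CompleteSpace K := Submodule.topologicalClosure.completeSpace R
  obtain ⟨sec, hsec⟩ : ∃ s : R → V, ∀ x : R, T (s x) = (x : E) :=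
    ⟨fun x => (LinearMap.mem_range.mp x.2).choose,
      fun x => (LinearMap.mem_range.mp x.2).choose_spec⟩
  have hfadd : ∀ x y : R, L (sec (x + y)) = L (sec x) + L (sec y) := by
    intro x y
    rw [← map_add]
    apply key
    rw [hsec, map_add, hsec, hsec, Submodule.coe_add]
  have hfsmul : ∀ (c : ℂ) (x : R), L (sec (c • x)) = c • L (sec x) := by
    intro c x
    rw [← map_smul]
    apply key
    rw [hsec, map_smul, hsec, Submodule.coe_smul]
  set Q₁ : R →ₗ[ℂ] F :=
    { toFun := fun x => L (sec x)
      map_add' := hfadd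
      map_smul' := hfsmul } with hQ₁
  have hQ₁bound : ∀ x : R, ‖Q₁ x‖ ≤ C' * ‖x‖ := by
    intro x
    have := hbound' (sec x)
    rwa [hsec x, ← Submodule.coe_norm] at this
  set Q₁c : R →L[ℂ] F := Q₁.mkContinuous C' hQ₁bound with hQ₁c
  set eL : R →ₗ[ℂ] K := Submodule.inclusion (R.le_topologicalClosure) with heL
  have heLnorm : ∀ x : R, ‖eL x‖ = ‖x‖ := fun x => rfl
  set e : R →L[ℂ] K := eL.mkContinuous 1 (fun x => by rw [heLnorm, one_mul]) with he
  have he_isom : Isometry e :=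
    AddMonoidHomClass.isometry_of_norm e (fun x => heLnorm x)
  have h_e : IsUniformInducing e := he_isom.isUniformInducing
  have h_dense : DenseRange e := by
    intro x
    rw [closure_subtype]
    have : (↑) '' (Set.range e) = (R : Set E) := by
      ext y
      constructor
      · rintro ⟨z, ⟨w, rfl⟩, rfl⟩
        exact w.2
      · rintro hy
        exact ⟨e ⟨y, hy⟩, ⟨⟨y, hy⟩, rfl⟩, rfl⟩
    rw [this]
    exact x.2
  set Q₂ : K →L[ℂ] F := Q₁c.extend e with hQ₂
  refine ⟨Q₂.comp K.orthogonalProjectionOnto, fun v => ?_⟩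
  have hTvR : T v ∈ R := LinearMap.mem_range_self T v
  have hTvK : T v ∈ K := R.le_topologicalClosure hTvR
  have hproj : K.orthogonalProjectionOnto (T v) = ⟨T v, hTvK⟩ := by
    exact K.orthogonalProjectionOnto_mem_subspace_eq_self (⟨T v, hTvK⟩ : K)
  have hee : e ⟨T v, hTvR⟩ = ⟨T v, hTvK⟩ := rfl
  have hext : Q₂ ⟨T v, hTvK⟩ = Q₁c ⟨T v, hTvR⟩ := by
    rw [← hee, hQ₂]
    exact ContinuousLinearMap.extend_eq _ h_dense h_e _
  have : Q₁c ⟨T v, hTvR⟩ = L v := by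
    show L (sec ⟨T v, hTvR⟩) = L v
    apply key
    rw [hsec]
  simp only [ContinuousLinearMap.comp_apply, hproj, hext, this]

theorem stmt_7 {H : Type*} [NormedAddCommGroup H] [InnerProductSpace ℂ H] [CompleteSpace H]
    (A : H →ₗ.[ℂ] H) (hA : Dense (A.domain : Set H)) (hAc : A.IsClosable) (g : ℕ → H)
    (α : ℝ) (hα : 0 < α)
    (hframe : ∀ u : A.adjoint.domain, (Summable fun n => ‖⟪(u : H), g n⟫‖ ^ 2) ∧
      α * ‖A.adjoint u‖ ^ 2 ≤ ∑' n, ‖⟪(u : H), g n⟫‖ ^ 2) :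
    ∃ t : ℕ → H,
      (∃ γ : ℝ, 0 < γ ∧ ∀ f : H, (Summable fun n => ‖⟪f, t n⟫‖ ^ 2) ∧
        ∑' n, ‖⟪f, t n⟫‖ ^ 2 ≤ γ * ‖f‖ ^ 2) ∧
      ∀ (h : A.domain) (u : A.adjoint.domain),
        ⟪(u : H), A h⟫ = ∑' n, ⟪t n, (h : H)⟫ * ⟪(u : H), g n⟫ := by
  classical
  have htwo : ((2 : ENNReal)).toReal = (2 : ℝ) := by norm_num
  have rpow2 : ∀ x : ℝ, x ^ (2 : ℝ) = x ^ (2 : ℕ) := fun x => by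
    rw [show (2 : ℝ) = ((2 : ℕ) : ℝ) by norm_num, Real.rpow_natCast]
  -- membership in ℓ²
  have hmem : ∀ u : A.adjoint.domain, Memℓp (fun n => ⟪g n, (u : H)⟫) 2 := by
    intro u
    apply memℓp_gen
    have := (hframe u).1
    rw [htwo]
    exact this.congr (fun n => by rw [norm_inner_symm ((u : H))]; exact (rpow2 _).symm)
  set T : A.adjoint.domain →ₗ[ℂ] lp (fun _ : ℕ => ℂ) 2 :=
    { toFun := fun u => ⟨fun n => ⟪g n, (u : H)⟫, hmem u⟩
      map_add' := by
        intro x y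
        refine lp.ext (funext fun n => ?_)
        simp [inner_add_right]
        rfl
      map_smul' := by
        intro c x
        refine lp.ext (funext fun n => ?_)
        simp [inner_smul_right] } with hT
  have hTnorm : ∀ u, ‖T u‖ ^ 2 = ∑' n, ‖⟪(u : H), g n⟫‖ ^ 2 := by
    intro u
    have := lp.norm_rpow_eq_tsum (p := 2) (by norm_num) (T u)
    rw [htwo] at this
    rw [← rpow2, this]
    apply tsum_congr
    intro n
    rw [rpow2]
    show ‖⟪g n, (u : H)⟫‖ ^ 2 = _
    rw [norm_inner_symm]
  set L : A.adjoint.domain →ₗ[ℂ] H := A.adjoint.toFun with hL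
  have hbound : ∀ u, ‖L u‖ ≤ (Real.sqrt α)⁻¹ * ‖T u‖ := by
    intro u
    have h1 := (hframe u).2
    rw [← hTnorm u] at h1
    have h2 : ‖L u‖ ^ 2 ≤ α⁻¹ * ‖T u‖ ^ 2 := by
      have hLu : ‖L u‖ = ‖A.adjoint u‖ := rfl
      rw [hLu, inv_mul_eq_div, le_div_iff₀ hα]
      linarith [h1, mul_comm α (‖A.adjoint u‖ ^ 2)]
    calc ‖L u‖ = Real.sqrt (‖L u‖ ^ 2) := (Real.sqrt_sq (norm_nonneg _)).symm
      _ ≤ Real.sqrt (α⁻¹ * ‖T u‖ ^ 2) := Real.sqrt_le_sqrt h2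
      _ = Real.sqrt α⁻¹ * Real.sqrt (‖T u‖ ^ 2) := Real.sqrt_mul (by positivity) _
      _ = (Real.sqrt α)⁻¹ * ‖T u‖ := by
          rw [Real.sqrt_inv, Real.sqrt_sq (norm_nonneg _)]
  obtain ⟨Q, hQ⟩ := exists_clm_factor T L _ hbound
  set Qs : H →L[ℂ] lp (fun _ : ℕ => ℂ) 2 := ContinuousLinearMap.adjoint Q with hQs
  refine ⟨fun n => Q (lp.single 2 n 1), ⟨‖Qs‖ ^ 2 + 1, by positivity, ?_⟩, ?_⟩
  · intro f
    have hcoord : ∀ n, ⟪f, Q (lp.single 2 n 1)⟫ = (starRingEnd ℂ) ((Qs f) n) := by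
      intro n
      rw [← ContinuousLinearMap.adjoint_inner_left]
      rw [lp.inner_single_right]
      rw [RCLike.inner_apply']
      rw [mul_one]
    have hnorm : ∀ n, ‖⟪f, Q (lp.single 2 n 1)⟫‖ ^ 2 = ‖(Qs f) n‖ ^ 2 := by
      intro n; rw [hcoord, RCLike.norm_conj]
    have hsummable : Summable fun n => ‖(Qs f) n‖ ^ (2 : ℝ) := by
      have := (lp.memℓp (Qs f)).summable (p := 2) (by norm_num)
      rwa [htwo] at this
    have hsummable' : Summable fun n => ‖(Qs f) n‖ ^ (2 : ℕ) :=
      hsummable.congr (fun n => rpow2 _)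
    constructor
    · exact hsummable'.congr (fun n => (hnorm n).symm)
    · have hsum : ∑' n, ‖⟪f, Q (lp.single 2 n 1)⟫‖ ^ 2 = ‖Qs f‖ ^ 2 := by
        have h3 := lp.norm_rpow_eq_tsum (p := 2) (by norm_num) (Qs f)
        rw [htwo] at h3
        rw [← rpow2, h3]
        exact tsum_congr (fun n => by rw [hnorm n, rpow2])
      rw [hsum]
      have := Qs.le_opNorm f
      nlinarith [norm_nonneg f, norm_nonneg (Qs f), norm_nonneg Qs]
  · intro h u
    have hadj : ⟪(A.adjoint u : H), (h : H)⟫ = ⟪(u : H), A h⟫ :=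
      LinearPMap.adjoint_isFormalAdjoint hA u h
    rw [← hadj]
    have h1 : (A.adjoint u : H) = Q (T u) := (hQ u).symm
    rw [h1, ← ContinuousLinearMap.adjoint_inner_right, lp.inner_eq_tsum]
    apply tsum_congr
    intro n
    have hTu : (T u : ∀ _ : ℕ, ℂ) n = ⟪g n, (u : H)⟫ := rfl
    have htn : ⟪Q (lp.single 2 n 1), (h : H)⟫ = (Qs (h : H)) n := by
      rw [← ContinuousLinearMap.adjoint_inner_right (A := Q), lp.inner_single_left]
      rw [RCLike.inner_apply']
      rw [map_one, one_mul]
    rw [htn, hTu]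
    rw [RCLike.inner_apply']
    rw [← inner_conj_symm ((u : H)) (g n)]
    exact mul_comm _ _
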